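/- There exists a constant M > 0, depending only on ℓ, such that for every N ∈ ℕ, every ζ ∈ ℝ^N and every index 1 ≤ i ≤ N: E[ 1 / (1 + √N |R_i(ζ,ξ)|) ] ≤ M (1 + |ζ_i|) · ( E[ 1 / (1 + √N |R(ζ,ξ)|)² ] )^{1/2}. -/

import Mathlib

open MeasureTheory ProbabilityTheory

/-- The joint law of `N` i.i.d. standard normal random variables `ξ = (ξ₁,…,ξ_N)`. -/
noncomputable def gaussPi (N : ℕ) : Measure (Fin N → ℝ) :=
  Measure.pi fun _ => ProbabilityTheory.gaussianReal 0 1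

/-- `R(ζ,ξ) = −√(2ℓ²/N) Σ_j ζ_j ξ_j − (ℓ²/N) Σ_j ξ_j²`. -/
noncomputable def Rfun (ℓ : ℝ) (N : ℕ) (ζ ξ : Fin N → ℝ) : ℝ :=
  -Real.sqrt (2 * ℓ ^ 2 / N) * ∑ j, ζ j * ξ j - ℓ ^ 2 / N * ∑ j, ξ j ^ 2

/-- `R_i(ζ,ξ) = −√(2ℓ²/N) Σ_{j≠i} ζ_j ξ_j − (ℓ²/N) Σ_{j≠i} ξ_j²`. -/
noncomputable def Rifun (ℓ : ℝ) (N : ℕ) (ζ ξ : Fin N → ℝ) (i : Fin N) : ℝ :=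
  -Real.sqrt (2 * ℓ ^ 2 / N) * ∑ j ∈ Finset.univ.erase i, ζ j * ξ j
    - ℓ ^ 2 / N * ∑ j ∈ Finset.univ.erase i, ξ j ^ 2

/-- `R_{ij}(ζ,ξ) = −√(2ℓ²/N) Σ_{k∉{i,j}} ζ_k ξ_k − (ℓ²/N) Σ_{k∉{i,j}} ξ_k²`. -/
noncomputable def Rijfun (ℓ : ℝ) (N : ℕ) (ζ ξ : Fin N → ℝ) (i j : Fin N) : ℝ :=
  -Real.sqrt (2 * ℓ ^ 2 / N) * ∑ k ∈ (Finset.univ.erase i).erase j, ζ k * ξ k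
    - ℓ ^ 2 / N * ∑ k ∈ (Finset.univ.erase i).erase j, ξ k ^ 2

open scoped ENNReal NNReal

instance (N : ℕ) : IsProbabilityMeasure (gaussPi N) := by
  unfold gaussPi; infer_instance

lemma map_eval (N : ℕ) (i : Fin N) :
    (gaussPi N).map (Function.eval i) = gaussianReal 0 1 := by
  ext s hs
  rw [Measure.map_apply (measurable_pi_apply i) hs]
  have : Function.eval i ⁻¹' s
      = Set.pi Set.univ (Function.update (fun _ : Fin N => (Set.univ : Set ℝ)) i s) := by
    rw [Set.eval_preimage]
  rw [this, gaussPi, Measure.pi_pi]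
  rw [Finset.prod_eq_single i]
  · simp
  · intro j _ hj; simp [Function.update_of_ne hj]
  · simp

lemma gauss_wd : gaussianReal 0 1
    = MeasureTheory.volume.withDensity (fun x => ((gaussianPDFReal 0 1 x).toNNReal : ℝ≥0∞)) := by
  rw [gaussianReal_of_var_ne_zero 0 one_ne_zero]
  rfl

lemma toNNReal_meas : Measurable (fun x => (gaussianPDFReal 0 1 x).toNNReal) :=
  (measurable_gaussianPDFReal 0 1).real_toNNReal

lemma integral_gauss (g : ℝ → ℝ) :
    ∫ x, g x ∂(gaussianReal 0 1) = ∫ x, gaussianPDFReal 0 1 x * g x := by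
  rw [gauss_wd, integral_withDensity_eq_integral_smul toNNReal_meas]
  congr 1 with x
  simp [NNReal.smul_def, Real.coe_toNNReal _ (gaussianPDFReal_nonneg 0 1 x)]

lemma integrable_gauss_iff {g : ℝ → ℝ} :
    Integrable g (gaussianReal 0 1) ↔ Integrable (fun x => gaussianPDFReal 0 1 x * g x) := by
  rw [gauss_wd, integrable_withDensity_iff_integrable_smul toNNReal_meas (g := g)]
  constructor <;> intro h <;> refine h.congr (Filter.Eventually.of_forall fun x => ?_) <;>
    simp [NNReal.smul_def, Real.coe_toNNReal _ (gaussianPDFReal_nonneg 0 1 x),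
      max_eq_left (gaussianPDFReal_nonneg 0 1 x)]

lemma pdf_mul_exp (x : ℝ) : gaussianPDFReal 0 1 x * Real.exp (x^2/4)
    = (Real.sqrt (2*Real.pi))⁻¹ * Real.exp (-(1/4:ℝ)*x^2) := by
  rw [gaussianPDFReal_def]
  simp only [NNReal.coe_one, mul_one, sub_zero, ← Real.exp_add, mul_assoc]
  ring_nf

lemma integrable_exp_quarter :
    Integrable (fun x => Real.exp (x^2/4)) (gaussianReal 0 1) := by
  rw [integrable_gauss_iff]
  refine Integrable.congr ((integrable_exp_neg_mul_sq (by norm_num : (0:ℝ) < 1/4)).const_mul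
    ((Real.sqrt (2*Real.pi))⁻¹)) ?_
  exact Filter.Eventually.of_forall fun x => (pdf_mul_exp x).symm

lemma integral_exp_quarter :
    ∫ x, Real.exp (x^2/4) ∂(gaussianReal 0 1) = Real.sqrt 2 := by
  rw [integral_gauss]
  simp_rw [pdf_mul_exp, integral_const_mul, integral_gaussian]
  have hπ : (0:ℝ) < Real.pi := Real.pi_pos
  rw [show Real.pi / (1/4 : ℝ) = 2 * (2 * Real.pi) by ring, Real.sqrt_mul (by norm_num)]
  rw [Real.sqrt_mul (by norm_num), Real.sqrt_mul (by norm_num)]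
  field_simp

set_option maxHeartbeats 1000000 in
/-- Equation `eqn:errgamdo3`: there is a constant `M > 0` depending only on `ℓ`
such that for all `N`, `ζ ∈ ℝ^N` and `1 ≤ i ≤ N`,
`E[1/(1 + √N |R_i(ζ,ξ)|)] ≤ M (1 + |ζ_i|) (E[1/(1 + √N |R(ζ,ξ)|)²])^{1/2}`. -/
theorem stmt_19 (ℓ : ℝ) (hℓ : 0 < ℓ) :
    ∃ M : ℝ, 0 < M ∧
      ∀ N : ℕ, 0 < N → ∀ ζ : Fin N → ℝ, ∀ i : Fin N,
        ∫ ξ, 1 / (1 + Real.sqrt N * |Rifun ℓ N ζ ξ i|) ∂gaussPi N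
          ≤ M * (1 + |ζ i|) *
              Real.sqrt (∫ ξ, 1 / (1 + Real.sqrt N * |Rfun ℓ N ζ ξ|) ^ 2 ∂gaussPi N) := by
  set C : ℝ := 3 + 24*ℓ^2 + 768*ℓ^4 with hC
  have hCpos : 0 < C := by positivity
  refine ⟨Real.sqrt (2*C), Real.sqrt_pos.mpr (by positivity), ?_⟩
  intro N hN ζ i
  have hN0 : (0:ℝ) < N := by exact_mod_cast hN
  have hN1 : (1:ℝ) ≤ N := by exact_mod_cast hN
  set P := gaussPi N
  set f : (Fin N → ℝ) → ℝ := fun ξ => 1 / (1 + Real.sqrt N * |Rifun ℓ N ζ ξ i|) with hf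
  set g : (Fin N → ℝ) → ℝ := fun ξ => 1 / (1 + Real.sqrt N * |Rfun ℓ N ζ ξ|) with hg
  set D : ℝ → ℝ := fun x => -Real.sqrt (2*ℓ^2/N) * (ζ i * x) - ℓ^2/N * x^2 with hD
  set h : (Fin N → ℝ) → ℝ := fun ξ => 1 + Real.sqrt N * |D (ξ i)| with hh
  -- splitting
  have hsplit : ∀ ξ : Fin N → ℝ, Rfun ℓ N ζ ξ = Rifun ℓ N ζ ξ i + D (ξ i) := by
    intro ξ
    simp only [Rfun, Rifun, hD]
    rw [← Finset.add_sum_erase _ (fun j => ζ j * ξ j) (Finset.mem_univ i),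
        ← Finset.add_sum_erase _ (fun j => ξ j ^ 2) (Finset.mem_univ i)]
    ring
  -- pointwise bound f ≤ h * g
  have hfhg : ∀ ξ, f ξ ≤ h ξ * g ξ := by
    intro ξ
    have ha : (0:ℝ) ≤ Real.sqrt N * |Rifun ℓ N ζ ξ i| := by positivity
    have hb : (0:ℝ) ≤ Real.sqrt N * |D (ξ i)| := by positivity
    have hc : Real.sqrt N * |Rfun ℓ N ζ ξ|
        ≤ Real.sqrt N * |Rifun ℓ N ζ ξ i| + Real.sqrt N * |D (ξ i)| := by
      rw [← mul_add]
      exact mul_le_mul_of_nonneg_left ((hsplit ξ ▸ abs_add_le _ _)) (Real.sqrt_nonneg _)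
    have hcpos : (0:ℝ) < 1 + Real.sqrt N * |Rfun ℓ N ζ ξ| := by positivity
    have hapos : (0:ℝ) < 1 + Real.sqrt N * |Rifun ℓ N ζ ξ i| := by positivity
    simp only [hf, hg, hh]
    rw [mul_one_div, div_le_div_iff₀ hapos hcpos, one_mul]
    nlinarith
  -- measurability
  have hRmeas : Measurable fun ξ : Fin N → ℝ => Rfun ℓ N ζ ξ := by
    unfold Rfun; fun_prop
  have hRimeas : Measurable fun ξ : Fin N → ℝ => Rifun ℓ N ζ ξ i := by
    unfold Rifun; fun_prop
  have hfmeas : Measurable f := by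
    simp only [hf]; fun_prop
  have hgmeas : Measurable g := by
    simp only [hg]; fun_prop
  have hhmeas : Measurable h := by
    simp only [hh, hD]; fun_prop
  -- bounds for f and g
  have hf01 : ∀ ξ, 0 ≤ f ξ ∧ f ξ ≤ 1 := by
    intro ξ
    have : (0:ℝ) < 1 + Real.sqrt N * |Rifun ℓ N ζ ξ i| := by positivity
    constructor
    · positivity
    · rw [hf, div_le_one this]; nlinarith [Real.sqrt_nonneg (N:ℝ), abs_nonneg (Rifun ℓ N ζ ξ i)]
  have hg01 : ∀ ξ, 0 ≤ g ξ ∧ g ξ ≤ 1 := by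
    intro ξ
    have : (0:ℝ) < 1 + Real.sqrt N * |Rfun ℓ N ζ ξ| := by positivity
    constructor
    · positivity
    · rw [hg, div_le_one this]; nlinarith [Real.sqrt_nonneg (N:ℝ), abs_nonneg (Rfun ℓ N ζ ξ)]
  have hh1 : ∀ ξ, 1 ≤ h ξ := by
    intro ξ; simp only [hh]
    nlinarith [Real.sqrt_nonneg (N:ℝ), abs_nonneg (D (ξ i))]
  -- bound on h²
  have hhsq : ∀ ξ, (h ξ)^2 ≤ C * (1 + |ζ i|)^2 * Real.exp ((ξ i)^2/4) := by
    intro ξ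
    set x := ξ i with hx
    have hDb : Real.sqrt N * |D x| ≤ Real.sqrt 2 * ℓ * (|ζ i| * |x|) + ℓ^2 * x^2 := by
      have h1 : |D x| ≤ Real.sqrt (2*ℓ^2/N) * (|ζ i| * |x|) + ℓ^2/N * x^2 := by
        simp only [hD]
        refine (abs_sub _ _).trans ?_
        rw [abs_mul, abs_neg, abs_mul, abs_of_nonneg (Real.sqrt_nonneg _), abs_mul]
        rw [abs_of_nonneg (by positivity : (0:ℝ) ≤ ℓ^2/N), abs_pow, sq_abs]
      have h2 : Real.sqrt N * (Real.sqrt (2*ℓ^2/N) * (|ζ i| * |x|) + ℓ^2/N * x^2)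
          ≤ Real.sqrt 2 * ℓ * (|ζ i| * |x|) + ℓ^2 * x^2 := by
        have hs : Real.sqrt N * Real.sqrt (2*ℓ^2/N) = Real.sqrt 2 * ℓ := by
          rw [← Real.sqrt_mul (le_of_lt hN0), show (N:ℝ) * (2*ℓ^2/N) = 2*ℓ^2 by
            field_simp, Real.sqrt_mul (by norm_num), Real.sqrt_sq hℓ.le]
        have hsn : Real.sqrt N ≤ N := by
          nlinarith [Real.sq_sqrt hN0.le, Real.sqrt_nonneg (N:ℝ),
            sq_nonneg (Real.sqrt N - 1)]
        have : Real.sqrt N * (ℓ^2/N * x^2) ≤ ℓ^2 * x^2 := by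
          rw [show Real.sqrt N * (ℓ^2/N * x^2) = Real.sqrt N / N * (ℓ^2 * x^2) by ring]
          have : Real.sqrt N / N ≤ 1 := by
            rw [div_le_one hN0]; exact hsn
          nlinarith [sq_nonneg (ℓ*x)]
        nlinarith [mul_nonneg (abs_nonneg (ζ i)) (abs_nonneg x), Real.sqrt_nonneg (N:ℝ)]
      calc Real.sqrt N * |D x| ≤ Real.sqrt N * (Real.sqrt (2*ℓ^2/N) * (|ζ i| * |x|) + ℓ^2/N * x^2) :=
            mul_le_mul_of_nonneg_left h1 (Real.sqrt_nonneg _)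
        _ ≤ _ := h2
    set E := Real.exp (x^2/4) with hE
    have hE1 : 1 ≤ E := by
      rw [hE]; nlinarith [Real.add_one_le_exp (x^2/4), sq_nonneg x]
    have hx2 : x^2 ≤ 4*E := by
      rw [hE]; nlinarith [Real.add_one_le_exp (x^2/4)]
    have hx4 : x^4 ≤ 256*E := by
      have h8 : x^2 ≤ 8 * Real.exp (x^2/8) := by nlinarith [Real.add_one_le_exp (x^2/8)]
      have hsq : (x^2)^2 ≤ (8 * Real.exp (x^2/8))^2 := pow_le_pow_left₀ (sq_nonneg x) h8 2
      have h14 : Real.exp (x^2/8)^2 = E := by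
        rw [sq, ← Real.exp_add, hE]; congr 1; ring
      nlinarith [sq_nonneg (Real.exp (x^2/8))]
    have hhle : h ξ ≤ 1 + (Real.sqrt 2 * ℓ * (|ζ i| * |x|) + ℓ^2 * x^2) := by
      simp only [hh, ← hx]; linarith
    have hs2 : Real.sqrt 2 ^ 2 = 2 := Real.sq_sqrt (by norm_num)
    have habs : |ζ i|^2 = (ζ i)^2 := sq_abs _
    have hxabs : |x|^2 = x^2 := sq_abs _
    have hhn : 0 ≤ h ξ := le_trans zero_le_one (hh1 ξ)
    have step : (h ξ)^2 ≤ (1 + (Real.sqrt 2 * ℓ * (|ζ i| * |x|) + ℓ^2 * x^2))^2 :=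
      pow_le_pow_left₀ hhn hhle 2
    have hu2 : (Real.sqrt 2 * ℓ * (|ζ i| * |x|))^2 = 2*ℓ^2*(ζ i)^2*x^2 := by
      rw [mul_pow, mul_pow, mul_pow, hs2, habs, hxabs]; ring
    have expand : (1 + (Real.sqrt 2 * ℓ * (|ζ i| * |x|) + ℓ^2 * x^2))^2
        ≤ 3 * (1 + 2*ℓ^2*(ζ i)^2*x^2 + ℓ^4*x^4) := by
      nlinarith [sq_nonneg (1 - Real.sqrt 2 * ℓ * (|ζ i| * |x|)),
        sq_nonneg (1 - ℓ^2*x^2), sq_nonneg (Real.sqrt 2 * ℓ * (|ζ i| * |x|) - ℓ^2*x^2), hu2]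
    have final : 3 * (1 + 2*ℓ^2*(ζ i)^2*x^2 + ℓ^4*x^4) ≤ C * (1 + |ζ i|)^2 * E := by
      have hz : (ζ i)^2 ≤ (1 + |ζ i|)^2 := by nlinarith [abs_nonneg (ζ i), sq_abs (ζ i)]
      have h1z : (1:ℝ) ≤ (1 + |ζ i|)^2 := by nlinarith [abs_nonneg (ζ i)]
      have t1 : 3 * (1:ℝ) ≤ 3 * ((1 + |ζ i|)^2 * E) := by nlinarith
      have t2 : 3 * (2*ℓ^2*(ζ i)^2*x^2) ≤ 24*ℓ^2 * ((1 + |ζ i|)^2 * E) := by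
        have : (ζ i)^2 * x^2 ≤ (1 + |ζ i|)^2 * (4*E) := by
          have := mul_le_mul hz hx2 (sq_nonneg x) (by positivity)
          linarith
        nlinarith [sq_nonneg ℓ]
      have t3 : 3 * (ℓ^4*x^4) ≤ 768*ℓ^4 * ((1 + |ζ i|)^2 * E) := by
        have h4 : x^4 ≤ (1 + |ζ i|)^2 * (256*E) := by nlinarith
        nlinarith [pow_pos hℓ 4]
      calc 3 * (1 + 2*ℓ^2*(ζ i)^2*x^2 + ℓ^4*x^4)
          = 3*(1:ℝ) + 3*(2*ℓ^2*(ζ i)^2*x^2) + 3*(ℓ^4*x^4) := by ring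
        _ ≤ 3 * ((1 + |ζ i|)^2 * E) + 24*ℓ^2 * ((1 + |ζ i|)^2 * E)
              + 768*ℓ^4 * ((1 + |ζ i|)^2 * E) := by linarith
        _ = C * (1 + |ζ i|)^2 * E := by rw [hC]; ring
    linarith
  -- integrability and value of exp((ξ i)^2/4)
  have hexp_int : Integrable (fun ξ : Fin N → ℝ => Real.exp ((ξ i)^2/4)) P := by
    have h1 := integrable_exp_quarter
    rw [← map_eval N i] at h1
    exact (integrable_map_measure
      ((by fun_prop : Measurable fun x : ℝ => Real.exp (x^2/4)).aestronglyMeasurable)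
      (measurable_pi_apply i).aemeasurable).mp h1
  have hexp_val : ∫ ξ, Real.exp ((ξ i)^2/4) ∂P = Real.sqrt 2 := by
    rw [← integral_exp_quarter, ← map_eval N i,
      integral_map (measurable_pi_apply i).aemeasurable
        ((by fun_prop : Measurable fun x : ℝ => Real.exp (x^2/4)).aestronglyMeasurable)]
  set H : (Fin N → ℝ) → ℝ := fun ξ => C * (1 + |ζ i|)^2 * Real.exp ((ξ i)^2/4) with hHdef
  have hHint : Integrable H P := hexp_int.const_mul _
  have hHval : ∫ ξ, H ξ ∂P = C * (1 + |ζ i|)^2 * Real.sqrt 2 := by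
    simp only [hHdef]
    rw [integral_const_mul, hexp_val]
  have hh2int : Integrable (fun ξ => (h ξ)^2) P := by
    refine hHint.mono' ((hhmeas.pow_const 2).aestronglyMeasurable) ?_
    refine Filter.Eventually.of_forall fun ξ => ?_
    rw [Real.norm_eq_abs, abs_of_nonneg (sq_nonneg _)]; exact hhsq ξ
  have hhL2 : MemLp h 2 P := (memLp_two_iff_integrable_sq hhmeas.aestronglyMeasurable).mpr hh2int
  have hgL2 : MemLp g 2 P := MemLp.of_bound hgmeas.aestronglyMeasurable 1
    (Filter.Eventually.of_forall fun ξ => by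
      rw [Real.norm_eq_abs, abs_of_nonneg (hg01 ξ).1]; exact (hg01 ξ).2)
  have hfint : Integrable f P := by
    rw [← memLp_one_iff_integrable]
    exact MemLp.of_bound hfmeas.aestronglyMeasurable 1
      (Filter.Eventually.of_forall fun ξ => by
        rw [Real.norm_eq_abs, abs_of_nonneg (hf01 ξ).1]; exact (hf01 ξ).2)
  have hhgint : Integrable (fun ξ => h ξ * g ξ) P := by
    refine (hHint.add (integrable_const 1)).mono' (hhmeas.mul hgmeas).aestronglyMeasurable ?_
    refine Filter.Eventually.of_forall fun ξ => ?_
    have hh0 : (0:ℝ) ≤ h ξ := le_trans zero_le_one (hh1 ξ)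
    rw [Real.norm_eq_abs, abs_of_nonneg (mul_nonneg hh0 (hg01 ξ).1)]
    have h1 : h ξ * g ξ ≤ h ξ := by
      have := mul_le_mul_of_nonneg_left (hg01 ξ).2 hh0
      simpa using this
    have h2 : h ξ ≤ (h ξ)^2 := by nlinarith [hh1 ξ]
    have h3 := hhsq ξ
    simp only [Pi.add_apply, hHdef]
    exact le_trans h1 (le_trans h2 (le_trans h3 (by linarith)))
  have step1 : ∫ ξ, f ξ ∂P ≤ ∫ ξ, h ξ * g ξ ∂P :=
    integral_mono hfint hhgint hfhg
  have hpq : Real.HolderConjugate 2 2 := Real.HolderConjugate.two_two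
  have hO2 : ENNReal.ofReal (2:ℝ) = 2 := by
    rw [ENNReal.ofReal_ofNat]
  have step2 := integral_mul_le_Lp_mul_Lq_of_nonneg hpq
    (Filter.Eventually.of_forall fun ξ => le_trans zero_le_one (hh1 ξ))
    (Filter.Eventually.of_forall fun ξ => (hg01 ξ).1)
    (hO2 ▸ hhL2) (hO2 ▸ hgL2)
  have hrpow2 : ∀ y : ℝ, y ^ (2:ℝ) = y ^ 2 := fun y => by
    rw [show (2:ℝ) = ((2:ℕ):ℝ) by norm_num, Real.rpow_natCast]
  simp only [hrpow2] at step2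
  rw [← Real.sqrt_eq_rpow, ← Real.sqrt_eq_rpow] at step2
  -- bound on sqrt of ∫ h²
  have hsum : ∫ ξ, (h ξ)^2 ∂P ≤ 2 * C * (1 + |ζ i|)^2 := by
    have h1 : ∫ ξ, (h ξ)^2 ∂P ≤ ∫ ξ, H ξ ∂P := integral_mono hh2int hHint hhsq
    have hsqrt2 : Real.sqrt 2 ≤ 2 := by
      nlinarith [Real.sq_sqrt (by norm_num : (0:ℝ) ≤ 2), Real.sqrt_nonneg 2,
        sq_nonneg (Real.sqrt 2 - 2)]
    rw [hHval] at h1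
    have hp : 0 ≤ C * (1 + |ζ i|)^2 * (2 - Real.sqrt 2) :=
      mul_nonneg (mul_nonneg hCpos.le (sq_nonneg _)) (by linarith)
    nlinarith
  have hsqle : Real.sqrt (∫ ξ, (h ξ)^2 ∂P) ≤ Real.sqrt (2*C) * (1 + |ζ i|) := by
    refine (Real.sqrt_le_sqrt hsum).trans ?_
    rw [Real.sqrt_mul (by positivity), Real.sqrt_sq (by positivity)]
  have hgoal : (∫ ξ, 1 / (1 + Real.sqrt N * |Rfun ℓ N ζ ξ|) ^ 2 ∂gaussPi N)
      = ∫ ξ, (g ξ)^2 ∂P := by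
    simp only [hg, div_pow, one_pow]; rfl
  calc ∫ ξ, 1 / (1 + Real.sqrt N * |Rifun ℓ N ζ ξ i|) ∂gaussPi N
      = ∫ ξ, f ξ ∂P := rfl
    _ ≤ ∫ ξ, h ξ * g ξ ∂P := step1
    _ ≤ Real.sqrt (∫ ξ, (h ξ)^2 ∂P) * Real.sqrt (∫ ξ, (g ξ)^2 ∂P) := step2
    _ ≤ (Real.sqrt (2*C) * (1 + |ζ i|)) * Real.sqrt (∫ ξ, (g ξ)^2 ∂P) :=
        mul_le_mul_of_nonneg_right hsqle (Real.sqrt_nonneg _)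
    _ = Real.sqrt (2*C) * (1 + |ζ i|) *
        Real.sqrt (∫ ξ, 1 / (1 + Real.sqrt N * |Rfun ℓ N ζ ξ|) ^ 2 ∂gaussPi N) := by
        rw [hgoal]
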